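/- Define E_r(ζ₁,…,ζₙ; η_r,…,η_n) = ∑_{J ⊆ {1,…,n}, |J| ≤ r} (−1)^{r−|J|} (∏_{j∈J} ζ_j) · ∑_{r ≤ l₁ ≤ ⋯ ≤ l_{r−|J|} ≤ n} η_{l₁}⋯η_{l_{r−|J|}}. Then E_r(ζ₁,…,ζₙ; η_r,…,η_n) = (ζₙ − ηₙ)·(∑_{J ⊆ {1,…,n−1}, |J| ≤ r−1} (−1)^{r−1−|J|} (∏_{j∈J} ζ_j) ∑_{r ≤ l₁ ≤ ⋯ ≤ l_{r−1−|J|} ≤ n} η_{l₁}⋯η_{l_{r−1−|J|}}) + ∑_{J ⊆ {1,…,n−1}, |J| ≤ r} (−1)^{r−|J|} (∏_{j∈J} ζ_j) ∑_{r ≤ l₁ ≤ ⋯ ≤ l_{r−|J|} ≤ n−1} η_{l₁}⋯η_{l_{r−|J|}}. -/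

import Mathlib

open Finset

variable {R : Type*} [CommRing R]

/-- The sum `∑_{r ≤ l₁ ≤ ⋯ ≤ l_m ≤ N} η_{l₁}⋯η_{l_m}` over weakly increasing
tuples with entries in `{r,…,N}` (tuples encoded as monotone maps
`Fin m → Fin (N+1)`); for `m = 0` this equals `1`, and it equals `0` if no
such tuple exists. -/
noncomputable def etaSum (η : ℕ → R) (r N m : ℕ) : R :=
  ∑ l ∈ Finset.univ.filter
      (fun l : Fin m → Fin (N + 1) =>
        (∀ i j : Fin m, i ≤ j → l i ≤ l j) ∧ ∀ i, r ≤ (l i : ℕ)),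
    ∏ i, η (l i)

lemma etaSum_zero (η : ℕ → R) (r N : ℕ) : etaSum η r N 0 = 1 := by
  simp [etaSum]

lemma etaSum_rec (η : ℕ → R) (r N m : ℕ) (h : r ≤ N + 1) :
    etaSum η r (N + 1) (m + 1)
      = η (N + 1) * etaSum η r (N + 1) m + etaSum η r N (m + 1) := by
  classical
  rw [etaSum, ← Finset.sum_filter_add_sum_filter_not _
      (fun l : Fin (m+1) → Fin (N+2) => l (Fin.last m) = Fin.last (N+1))]
  congr 1
  · rw [etaSum, Finset.mul_sum]
    refine Finset.sum_bij' (fun l _ => l ∘ Fin.castSucc)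
      (fun l' _ => Fin.snoc l' (Fin.last (N+1))) ?_ ?_ ?_ ?_ ?_
    · intro l hl
      simp only [mem_filter, mem_univ, true_and] at hl ⊢
      obtain ⟨⟨hmono, hr⟩, _⟩ := hl
      exact ⟨fun i j hij => hmono _ _ (by simpa using hij), fun i => hr _⟩
    · intro l' hl'
      simp only [mem_filter, mem_univ, true_and] at hl' ⊢
      obtain ⟨hmono, hr⟩ := hl'
      refine ⟨⟨?_, ?_⟩, by simp⟩
      · intro i j hij
        rcases Fin.eq_castSucc_or_eq_last j with ⟨j', rfl⟩ | rfl
        · rcases Fin.eq_castSucc_or_eq_last i with ⟨i', rfl⟩ | rfl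
          · simpa using hmono i' j' (by simpa using hij)
          · have := Fin.le_last (Fin.castSucc j')
            have h2 : (Fin.last m : Fin (m+1)) ≤ Fin.castSucc j' := hij
            have := Fin.castSucc_lt_last j'
            omega
        · simp [Fin.snoc, Fin.le_last]
      · intro i
        rcases Fin.eq_castSucc_or_eq_last i with ⟨i', rfl⟩ | rfl
        · simpa using hr i'
        · simpa using h
    · intro l hl
      simp only [mem_filter, mem_univ, true_and] at hl
      funext i
      rcases Fin.eq_castSucc_or_eq_last i with ⟨i', rfl⟩ | rfl
      · simp
      · simp [hl.2]
    · intro l' _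
      funext i
      simp
    · intro l hl
      simp only [mem_filter, mem_univ, true_and] at hl
      rw [Fin.prod_univ_castSucc]
      simp [hl.2, mul_comm]
  · rw [etaSum]
    have key : ∀ l : Fin (m+1) → Fin (N+2),
        ((∀ i j : Fin (m+1), i ≤ j → l i ≤ l j) ∧ (∀ i, r ≤ (l i : ℕ))) →
        l (Fin.last m) ≠ Fin.last (N+1) → ∀ i, (l i : ℕ) < N + 1 := by
      intro l hl hne i
      have h1 : l i ≤ l (Fin.last m) := hl.1 i (Fin.last m) (Fin.le_last i)
      have h2 : l (Fin.last m) < Fin.last (N+1) :=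
        lt_of_le_of_ne (Fin.le_last _) hne
      have := Fin.lt_iff_val_lt_val.mp h2
      simp only [Fin.val_last] at this
      exact lt_of_le_of_lt h1 this
    refine Finset.sum_bij' (fun l hl => fun i => Fin.castLT (l i) ?_)
      (fun l' _ => fun i => Fin.castSucc (l' i)) ?_ ?_ ?_ ?_ ?_
    · simp only [mem_filter, mem_univ, true_and] at hl
      exact key l hl.1 hl.2 i
    · intro l hl
      simp only [mem_filter, mem_univ, true_and] at hl ⊢
      exact ⟨fun i j hij => hl.1.1 i j hij, fun i => hl.1.2 i⟩
    · intro l' hl'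
      simp only [mem_filter, mem_univ, true_and] at hl' ⊢
      refine ⟨⟨fun i j hij => by simpa using hl'.1 i j hij, fun i => by simpa using hl'.2 i⟩, ?_⟩
      intro hcontra
      have := congrArg Fin.val hcontra
      simp only [Fin.coe_castSucc, Fin.val_last] at this
      exact absurd this (by omega : ((l' (Fin.last m)) : ℕ) ≠ N + 1).elim
    · intro l hl; funext i; ext; simp
    · intro l' hl'; funext i; ext; simp
    · intro l hl; simp

/-- `E_r(ζ₁,…,ζₙ; η_r,…,η_n)` from the paper. -/
noncomputable def Efun (ζ η : ℕ → R) (r n : ℕ) : R :=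
  ∑ J ∈ (Finset.Icc 1 n).powerset.filter (fun J => J.card ≤ r),
    (-1 : R) ^ (r - J.card) * (∏ j ∈ J, ζ j) * etaSum η r n (r - J.card)

/-- Decomposition of `E_r`: splitting off the variable `ζₙ` one has
`E_r(ζ;η) = (ζₙ − ηₙ)·(sum with one ζ-variable less and tuples of length
`r−1−|J|`) + (sum with tuples ranging only up to n−1)`. -/
theorem stmt4 (ζ η : ℕ → R) (r n : ℕ) (hr : 1 ≤ r) (hrn : r ≤ n) :
    Efun ζ η r n =
      (ζ n - η n) *
        (∑ J ∈ (Finset.Icc 1 (n - 1)).powerset.filter (fun J => J.card ≤ r - 1),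
          (-1 : R) ^ (r - 1 - J.card) * (∏ j ∈ J, ζ j) *
            etaSum η r n (r - 1 - J.card)) +
      ∑ J ∈ (Finset.Icc 1 (n - 1)).powerset.filter (fun J => J.card ≤ r),
        (-1 : R) ^ (r - J.card) * (∏ j ∈ J, ζ j) *
          etaSum η r (n - 1) (r - J.card) := by
  classical
  have hn : 1 ≤ n := hr.trans hrn
  have hicc : Finset.Icc 1 n = insert n (Finset.Icc 1 (n-1)) := by
    ext x; simp only [Finset.mem_Icc, Finset.mem_insert]; omega
  have hnotmem : n ∉ Finset.Icc 1 (n-1) := by simp only [Finset.mem_Icc]; omega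
  rw [Efun, Finset.sum_filter, hicc, Finset.sum_powerset_insert hnotmem,
    Finset.mul_sum, Finset.sum_filter, Finset.sum_filter, ← Finset.sum_add_distrib,
    ← Finset.sum_add_distrib]
  refine Finset.sum_congr rfl ?_
  intro J hJ
  simp only [Finset.mem_powerset] at hJ
  have hnJ : n ∉ J := fun hx => hnotmem (hJ hx)
  rw [Finset.card_insert_of_notMem hnJ, Finset.prod_insert hnJ]
  rcases lt_trichotomy J.card r with hlt | heq | hgt
  · -- J.card ≤ r - 1
    have h1 : J.card ≤ r := le_of_lt hlt
    have h2 : J.card + 1 ≤ r := hlt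
    have h3 : J.card ≤ r - 1 := by omega
    rw [if_pos h1, if_pos h2, if_pos h3, if_pos h1]
    obtain ⟨m, hm⟩ : ∃ m, r - 1 - J.card = m := ⟨_, rfl⟩
    have hm1 : r - J.card = m + 1 := by omega
    have hm2 : r - (J.card + 1) = m := by omega
    rw [hm, hm1, hm2]
    obtain ⟨n', hn'⟩ : ∃ n', n = n' + 1 := ⟨n - 1, by omega⟩
    have hrec := etaSum_rec η r n' m (by omega)
    rw [hn'] at *
    simp only [Nat.add_sub_cancel]
    rw [hrec, pow_succ]
    ring
  · -- J.card = r
    rw [if_pos heq.le, if_neg (by omega), if_neg (by omega), if_pos heq.le,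
      heq, Nat.sub_self, etaSum_zero, etaSum_zero]
    ring
  · rw [if_neg (by omega), if_neg (by omega), if_neg (by omega), if_neg (by omega)]
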